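/- Let m ≥ 0 be an integer and let Q(r) := √8 (m+1) r^m / (1 + r^{2m+2}). Then for all r > 0 one has A_θ[Q](r) = −2(m+1) r^{2m+2}/(1 + r^{2m+2}), and Q solves the Bogomol'nyi equation: ∂_r Q(r) = ((m + A_θ[Q](r))/r) Q(r) for all r > 0. -/

import Mathlib

open MeasureTheory Set

/-- `A_θ[ψ](r) = -(1/2)∫₀^r |ψ(r')|² r' dr'`. -/
noncomputable def Atheta (ψ : ℝ → ℂ) (r : ℝ) : ℝ :=
  -(1/2) * ∫ t in (0:ℝ)..r, ‖ψ t‖ ^ 2 * t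

/-- The Jackiw–Pi vortex `Q(r) = √8 (m+1) r^m / (1 + r^{2m+2})`. -/
noncomputable def Qp (m : ℤ) (r : ℝ) : ℝ :=
  Real.sqrt 8 * ((m : ℝ) + 1) * r ^ m / (1 + r ^ (2 * m + 2))

lemma denom_pos (n : ℕ) (t : ℝ) : 0 < 1 + t ^ (2*n+2) := by
  have h : (0:ℝ) ≤ t ^ (2*n+2) := by
    rw [show 2*n+2 = 2*(n+1) by ring, pow_mul]
    positivity
  linarith

lemma Qp_eq (n : ℕ) (t : ℝ) :
    Qp (n : ℤ) t = Real.sqrt 8 * ((n:ℝ)+1) * t ^ n / (1 + t ^ (2*n+2)) := by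
  unfold Qp
  rw [show (2*(n:ℤ)+2) = ((2*n+2 : ℕ) : ℤ) by push_cast; ring, zpow_natCast, zpow_natCast]
  norm_num

lemma hF (n : ℕ) (t : ℝ) :
    HasDerivAt (fun t : ℝ => -4*((n:ℝ)+1)/(1+t^(2*n+2)))
      (8*((n:ℝ)+1)^2 * t^(2*n+1) / (1+t^(2*n+2))^2) t := by
  have hd := denom_pos n t
  have h1 : HasDerivAt (fun t : ℝ => 1 + t^(2*n+2)) ((2*n+2 : ℕ) * t^(2*n+1)) t := by
    simpa using (hasDerivAt_pow (2*n+2) t).const_add 1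
  have h2 := (h1.inv hd.ne').const_mul (-4*((n:ℝ)+1))
  refine h2.congr_deriv ?_
  push_cast
  field_simp
  ring

lemma integrand_eq (n : ℕ) (t : ℝ) :
    ‖((Qp (n:ℤ) t : ℝ) : ℂ)‖ ^ 2 * t = 8*((n:ℝ)+1)^2 * t^(2*n+1) / (1+t^(2*n+2))^2 := by
  rw [Complex.norm_real, Real.norm_eq_abs, sq_abs, Qp_eq]
  have hd := (denom_pos n t).ne'
  have h8 : Real.sqrt 8 ^ 2 = 8 := Real.sq_sqrt (by norm_num)
  field_simp
  ring_nf
  rw [h8]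
  ring

lemma hA (n : ℕ) (r : ℝ) (hr : 0 < r) :
    Atheta (fun t => ((Qp (n:ℤ) t : ℝ) : ℂ)) r
      = -2 * ((n : ℝ) + 1) * r ^ (2 * n + 2) / (1 + r ^ (2 * n + 2)) := by
  unfold Atheta
  have hint : ∫ t in (0:ℝ)..r, ‖((Qp (n:ℤ) t : ℝ) : ℂ)‖ ^ 2 * t
      = (-4*((n:ℝ)+1)/(1+r^(2*n+2))) - (-4*((n:ℝ)+1)/(1+(0:ℝ)^(2*n+2))) := by
    rw [show (∫ t in (0:ℝ)..r, ‖((Qp (n:ℤ) t : ℝ) : ℂ)‖ ^ 2 * t)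
        = ∫ t in (0:ℝ)..r, 8*((n:ℝ)+1)^2 * t^(2*n+1) / (1+t^(2*n+2))^2 by
        apply intervalIntegral.integral_congr
        intro t _
        exact integrand_eq n t]
    apply intervalIntegral.integral_eq_sub_of_hasDerivAt
    · intro t _; exact hF n t
    · apply ContinuousOn.intervalIntegrable
      apply Continuous.continuousOn
      exact Continuous.div (by continuity) (by continuity)
        (fun t => pow_ne_zero 2 (denom_pos n t).ne')
  rw [hint]
  have hd := (denom_pos n r).ne'
  rw [zero_pow (by omega)]
  field_simp
  ring

lemma npow_aux (n : ℕ) (r : ℝ) (hr : r ≠ 0) : (n:ℝ) * r^(n-1) * r = n * r^n := by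
  cases n with
  | zero => simp
  | succ k => simp [pow_succ]; ring

/-- `Q` solves the Bogomol'nyi equation: for `m ≥ 0`,
`A_θ[Q](r) = −2(m+1) r^{2m+2}/(1+r^{2m+2})` and `∂_r Q = ((m + A_θ[Q])/r) Q` on `(0,∞)`. -/
theorem Q_solves_Bogomolnyi (m : ℤ) (hm : 0 ≤ m) :
    (∀ r ∈ Set.Ioi (0:ℝ),
      Atheta (fun t => ((Qp m t : ℝ) : ℂ)) r
        = -2 * ((m : ℝ) + 1) * r ^ (2 * m + 2) / (1 + r ^ (2 * m + 2))) ∧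
    (∀ r ∈ Set.Ioi (0:ℝ),
      HasDerivAt (Qp m)
        ((((m : ℝ) + Atheta (fun t => ((Qp m t : ℝ) : ℂ)) r) / r) * Qp m r) r) := by
  obtain ⟨n, rfl⟩ := Int.eq_ofNat_of_zero_le hm
  have hzpow : ∀ r : ℝ, r ^ (2*(n:ℤ)+2) = r ^ (2*n+2) := fun r => by
    rw [show (2*(n:ℤ)+2) = ((2*n+2 : ℕ) : ℤ) by push_cast; ring, zpow_natCast]
  constructor
  · intro r hr
    rw [hA n r hr, hzpow]
    norm_num
  · intro r hr
    have hr0 : (0:ℝ) < r := hr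
    have hd := denom_pos n r
    -- derivative of numerator
    have hu : HasDerivAt (fun t : ℝ => Real.sqrt 8 * ((n:ℝ)+1) * t ^ n)
        (Real.sqrt 8 * ((n:ℝ)+1) * ((n:ℝ) * r^(n-1))) r :=
      (hasDerivAt_pow n r).const_mul _
    have hv : HasDerivAt (fun t : ℝ => 1 + t^(2*n+2)) ((2*n+2 : ℕ) * r^(2*n+1)) r := by
      simpa using (hasDerivAt_pow (2*n+2) r).const_add 1
    have hQ := hu.div hv hd.ne'
    have hfun : (fun t : ℝ => Real.sqrt 8 * ((n:ℝ)+1) * t ^ n / (1 + t ^ (2*n+2))) = Qp (n:ℤ) := by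
      funext t; rw [Qp_eq]
    simp only [Pi.div_def] at hQ
    rw [hfun] at hQ
    refine hQ.congr_deriv ?_
    rw [hA n r hr0, Qp_eq]
    have h2 : (n:ℝ) * r^(n-1) = (n:ℝ) * r^n / r := by
      rw [eq_div_iff hr0.ne']; exact npow_aux n r hr0.ne'
    rw [h2]
    push_cast
    field_simp
    ring
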